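/- arXiv:1307.1560 — 6 statements merged into one kernel-verified Lean document; each statement's English description precedes it below -/
import Mathlib

section
/- For every k ≥ 1 and every j with 1 ≤ j ≤ k, the sequence obtained from the Zimin word Z_k by deleting all letters smaller than j is j-interleaved, i.e., for each pair of adjacent elements of the resulting sequence exactly one of them equals j. -/
/-- Zimin words: `zimin 1 = [1]`, `zimin k = zimin (k-1) ++ [k] ++ zimin (k-1)`. -/
def zimin : ℕ → List ℕ
  | 0 => []
  | k + 1 => zimin k ++ [k + 1] ++ zimin k

/-- A sequence is `j`-interleaved if among each two adjacent elements exactly one equals `j`. -/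
def Interleaved (j : ℕ) (u : List ℕ) : Prop :=
  u.Chain' (fun a b => Xor' (a = j) (b = j))

/-- Delete from `u` all letters smaller than `j`. -/
def delBelow (j : ℕ) (u : List ℕ) : List ℕ :=
  u.filter (fun a => decide (j ≤ a))

/-- `compress u` removes every element of `u` that has a strictly larger element
both somewhere to its left and somewhere to its right. -/
def compress (u : List ℕ) : List ℕ :=
  (List.range u.length).filterMap fun i =>
    if ((u.take i).any fun l => decide (u.getD i 0 < l)) &&
       ((u.drop (i + 1)).any fun r => decide (u.getD i 0 < r))
    then none else some (u.getD i 0)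

lemma zimin_mem_le : ∀ n, ∀ a ∈ zimin n, a ≤ n := by
  intro n
  induction n with
  | zero => simp [zimin]
  | succ k ih =>
    intro a ha
    simp only [zimin, List.mem_append, List.mem_singleton] at ha
    rcases ha with (ha | ha) | ha
    · exact le_trans (ih a ha) (Nat.le_succ k)
    · omega
    · exact le_trans (ih a ha) (Nat.le_succ k)

lemma delBelow_zimin_nil {j n : ℕ} (h : n < j) : delBelow j (zimin n) = [] := by
  apply List.filter_eq_nil_iff.mpr
  intro a ha
  have := zimin_mem_le n a ha
  simp; omega

lemma aux (j : ℕ) (hj1 : 1 ≤ j) : ∀ m,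
    Interleaved j (delBelow j (zimin (j + m))) ∧
    (delBelow j (zimin (j + m))).head? = some j ∧
    (delBelow j (zimin (j + m))).getLast? = some j := by
  intro m
  induction m with
  | zero =>
    obtain ⟨j', rfl⟩ : ∃ j', j = j' + 1 := ⟨j - 1, by omega⟩
    have hbase : delBelow (j' + 1) (zimin (j' + 1)) = [j' + 1] := by
      show delBelow (j' + 1) (zimin j' ++ [j' + 1] ++ zimin j') = _
      have h0 := delBelow_zimin_nil (Nat.lt_succ_self j')
      rw [delBelow] at h0
      rw [delBelow, List.filter_append, List.filter_append, h0]
      simp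
    rw [Nat.add_zero, hbase]
    refine ⟨List.isChain_singleton _, rfl, rfl⟩
  | succ m ih =>
    obtain ⟨hch, hhd, hlast⟩ := ih
    set d := delBelow j (zimin (j + m)) with hd
    have hstep : delBelow j (zimin (j + (m + 1))) = (d ++ [j + m + 1]) ++ d := by
      show delBelow j (zimin (j + m) ++ [j + m + 1] ++ zimin (j + m)) = _
      rw [delBelow, List.filter_append, List.filter_append]
      have h1 : List.filter (fun a => decide (j ≤ a)) [j + m + 1] = [j + m + 1] := by
        simp; omega
      rw [h1]; rfl
    have hne : j + m + 1 ≠ j := by omega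
    have hR : Xor' (j = j) (j + m + 1 = j) := by simp [hne, Xor']
    have hR2 : Xor' (j + m + 1 = j) (j = j) := by simp [hne, Xor']
    rw [hstep]
    refine ⟨?_, ?_, ?_⟩
    · rw [Interleaved, List.Chain', List.isChain_append]
      refine ⟨?_, hch, ?_⟩
      · rw [List.isChain_append]
        refine ⟨hch, List.isChain_singleton _, ?_⟩
        intro x hx y hy
        simp at hy
        rw [hlast] at hx
        simp at hx
        subst hx hy
        exact hR
      · intro x hx y hy
        rw [List.getLast?_concat] at hx
        rw [hhd] at hy
        simp at hx hy
        subst hx hy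
        exact hR2
    · rw [List.head?_append, List.head?_append, hhd]; rfl
    · rw [List.getLast?_append, hlast]; rfl


/-- For every `k ≥ 1` and `1 ≤ j ≤ k`, deleting from `Z_k` all letters smaller than `j`
yields a `j`-interleaved sequence. -/
theorem zimin_delBelow_interleaved (k j : ℕ) (hk : 1 ≤ k) (hj1 : 1 ≤ j) (hjk : j ≤ k) :
    Interleaved j (delBelow j (zimin k)) := by
  obtain ⟨m, rfl⟩ : ∃ m, k = j + m := ⟨k - j, by omega⟩
  exact (aux j hj1 m).1
end

section
/- A nonempty word u over the alphabet {1,...,k} is a factor (contiguous subword) of the Zimin word Z_k if and only if for every j with 1 ≤ j ≤ k, the sequence obtained from u by deleting all letters smaller than j is j-interleaved. -/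
/-- interleave 1 after each element -/
def wf : List ℕ → List ℕ
  | [] => []
  | a :: l => a :: 1 :: wf l

lemma wf_append (a b : List ℕ) : wf (a ++ b) = wf a ++ wf b := by
  induction a with
  | nil => simp [wf]
  | cons x t ih => simp [wf, ih]

lemma zimin_succ (k : ℕ) : zimin (k + 1) = 1 :: wf ((zimin k).map (· + 1)) := by
  induction k with
  | zero => simp [zimin, wf]
  | succ k ih =>
    have h2 : (zimin (k+1)).map (· + 1) = (zimin k).map (· + 1) ++ [k+2] ++ (zimin k).map (· + 1) := by
      simp [zimin]
    calc zimin (k+2) = zimin (k+1) ++ [k+2] ++ zimin (k+1) := rfl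
      _ = (1 :: wf ((zimin k).map (· + 1))) ++ [k+2] ++ (1 :: wf ((zimin k).map (· + 1))) := by rw [ih]
      _ = 1 :: wf ((zimin (k+1)).map (· + 1)) := by rw [h2, wf_append, wf_append]; simp [wf]

lemma mem_zimin : ∀ k, ∀ a ∈ zimin k, 1 ≤ a ∧ a ≤ k := by
  intro k
  induction k with
  | zero => simp [zimin]
  | succ k ih =>
    intro a ha
    simp only [zimin, List.mem_append, List.mem_singleton] at ha
    rcases ha with (h | h) | h
    · exact ⟨(ih a h).1, le_trans (ih a h).2 (Nat.le_succ k)⟩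
    · omega
    · exact ⟨(ih a h).1, le_trans (ih a h).2 (Nat.le_succ k)⟩

lemma altj : ∀ k j, 1 ≤ j → j ≤ k →
    (delBelow j (zimin k)).head? = some j ∧ (delBelow j (zimin k)).getLast? = some j ∧
      Interleaved j (delBelow j (zimin k)) := by
  intro k
  induction k with
  | zero => intro j h1 h2; omega
  | succ k ih =>
    intro j h1 h2
    have hsplit : delBelow j (zimin (k+1)) =
        delBelow j (zimin k) ++ [k+1] ++ delBelow j (zimin k) := by
      simp only [zimin, delBelow, List.filter_append]
      congr 2
      simp [h2]
    by_cases hjk : j ≤ k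
    · obtain ⟨hh, hl, hc⟩ := ih j h1 hjk
      have hne : delBelow j (zimin k) ≠ [] := by
        intro h; rw [h] at hh; simp at hh
      constructor
      · rw [hsplit, List.append_assoc, List.head?_append_of_ne_nil _ hne]
        exact hh
      constructor
      · rw [hsplit, List.getLast?_append_of_ne_nil _ hne]
        exact hl
      · rw [hsplit, List.append_assoc]
        refine List.isChain_append.mpr ⟨hc, ?_, ?_⟩
        · refine List.isChain_append.mpr ⟨List.isChain_singleton _, hc, ?_⟩
          intro x hx y hy
          simp at hx
          rw [hh] at hy; simp at hy
          subst hx; subst hy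
          exact Or.inr ⟨rfl, by omega⟩
        · intro x hx y hy
          rw [hl] at hx; simp at hx
          simp at hy
          subst hx; subst hy
          exact Or.inl ⟨rfl, by omega⟩
    · have hj : j = k + 1 := by omega
      subst hj
      have hnil : delBelow (k+1) (zimin k) = [] := by
        apply List.filter_eq_nil_iff.mpr
        intro a ha
        have := (mem_zimin k a ha).2
        simp; omega
      rw [hsplit, hnil]
      refine ⟨rfl, rfl, ?_⟩
      exact List.isChain_singleton _

/-- a 1-interleaved word starting with 1 is a prefix of `1 :: wf (its non-1 letters)`. -/
lemma lemP : ∀ u : List ℕ, Interleaved 1 u → (∀ a ∈ u, 1 ≤ a) → u.head? = some 1 →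
    u <+: 1 :: wf (delBelow 2 u)
  | [], _, _, hh => by simp at hh
  | [a], _, _, hh => by
    simp at hh
    subst hh
    simp [delBelow, wf]
  | a :: b :: t, h, hpos, hh => by
    simp at hh
    subst hh
    have hab : Xor' ((1:ℕ) = 1) (b = 1) := (List.isChain_cons_cons.mp h).1
    have hb : b ≠ 1 := by
      rcases hab with ⟨_, h2⟩ | ⟨h1, _⟩
      · exact h2
      · exact absurd rfl ‹¬(1:ℕ)=1›
    have hb2 : 2 ≤ b := by have := hpos b (by simp); omega
    have hfil : delBelow 2 (1 :: b :: t) = b :: delBelow 2 t := by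
      simp [delBelow, List.filter_cons, hb2]
    rw [hfil, wf]
    have ht : t <+: 1 :: wf (delBelow 2 t) := by
      cases t with
      | nil => exact List.nil_prefix
      | cons c t' =>
        have hbc : Xor' (b = 1) (c = 1) := (List.isChain_cons_cons.mp (List.isChain_cons_cons.mp h).2).1
        have hc : c = 1 := by
          rcases hbc with ⟨h1, _⟩ | ⟨h1, _⟩
          · exact absurd h1 hb
          · exact h1
        exact lemP (c :: t') (List.isChain_cons_cons.mp h).2.tail
          (fun a ha => hpos a (by simp only [List.mem_cons] at ha ⊢; tauto)) (by simp [hc])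
    obtain ⟨r, hr⟩ := ht
    exact ⟨r, by simp [← hr]⟩

lemma lemQ (u : List ℕ) (h : Interleaved 1 u) (hpos : ∀ a ∈ u, 1 ≤ a) :
    u <:+: 1 :: wf (delBelow 2 u) := by
  cases u with
  | nil => exact List.nil_infix
  | cons a t =>
    by_cases ha : a = 1
    · exact (lemP (a :: t) h hpos (by simp [ha])).isInfix
    · have h' : Interleaved 1 (1 :: a :: t) := List.IsChain.cons h (by
        intro y hy
        simp at hy
        subst hy
        exact Or.inl ⟨rfl, ha⟩)
      have hfil : delBelow 2 (1 :: a :: t) = delBelow 2 (a :: t) := by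
        simp [delBelow, List.filter_cons]
      have := lemP (1 :: a :: t) h' (by
        intro x hx; simp at hx; rcases hx with h | h | h
        · omega
        · exact hpos x (by simp [h])
        · exact hpos x (by simp [h])) (by simp)
      rw [hfil] at this
      exact ((List.suffix_cons 1 (a :: t)).isInfix).trans this.isInfix

/-- monotonicity: `1 :: wf w` is an infix of `1 :: wf (a ++ w ++ b)`. -/
lemma lemC (a w b : List ℕ) : (1 :: wf w) <:+: (1 :: wf (a ++ w ++ b)) := by
  rcases a.eq_nil_or_concat with rfl | ⟨L, x, rfl⟩
  · exact ⟨[], wf b, by simp [wf_append]⟩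
  · refine ⟨1 :: (wf L ++ [x]), wf b, ?_⟩
    simp [wf_append, wf]

lemma backward : ∀ k (u : List ℕ), u ≠ [] → (∀ a ∈ u, 1 ≤ a ∧ a ≤ k) →
    (∀ j, 1 ≤ j → j ≤ k → Interleaved j (delBelow j u)) → u <:+: zimin k := by
  intro k
  induction k with
  | zero =>
    intro u hu hal _
    obtain ⟨a, ha⟩ := List.exists_mem_of_ne_nil u hu
    have := hal a ha; omega
  | succ k ih =>
    intro u hu hal hint
    have hpos : ∀ a ∈ u, 1 ≤ a := fun a ha => (hal a ha).1
    have hdel1 : delBelow 1 u = u :=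
      List.filter_eq_self.mpr (fun a ha => by simp [hpos a ha])
    have h1 : Interleaved 1 u := by rw [← hdel1]; exact hint 1 le_rfl (by omega)
    set v := delBelow 2 u with hv
    have huW : u <:+: 1 :: wf v := lemQ u h1 hpos
    by_cases hvnil : v = []
    · have hall1 : ∀ a ∈ u, a = 1 := by
        intro a ha
        by_contra hne
        have h2 : 2 ≤ a := by have := hpos a ha; omega
        have : a ∈ v := by
          rw [hv]; exact List.mem_filter.mpr ⟨ha, by simpa⟩
        rw [hvnil] at this; simp at this
      have hu1 : u = [1] := by
        cases u with
        | nil => exact absurd rfl hu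
        | cons a t =>
          have ha := hall1 a (by simp)
          cases t with
          | nil => rw [ha]
          | cons b t' =>
            have hb := hall1 b (by simp)
            have := (List.isChain_cons_cons.mp h1).1
            rw [ha, hb] at this
            rcases this with ⟨_, h2⟩ | ⟨_, h2⟩ <;> exact absurd rfl h2
      rw [hu1, zimin_succ]
      exact ⟨[], wf ((zimin k).map (· + 1)), by simp⟩
    · set u' := v.map (· - 1) with hu'
      have hvmem : ∀ a ∈ v, 2 ≤ a ∧ a ≤ k + 1 := by
        intro a ha
        rw [hv] at ha
        have h2 := List.of_mem_filter ha
        have hm := List.mem_of_mem_filter ha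
        simp at h2
        exact ⟨h2, (hal a hm).2⟩
      have hvmap : u'.map (· + 1) = v := by
        rw [hu', List.map_map]
        conv_rhs => rw [← List.map_id v]
        apply List.map_congr_left
        intro a ha
        have := (hvmem a ha).1
        simp; omega
      have hIH : u' <:+: zimin k := by
        apply ih
        · simp [hu', hvnil]
        · intro a ha
          rw [hu'] at ha
          obtain ⟨b, hb, rfl⟩ := List.mem_map.mp ha
          have := hvmem b hb
          omega
        · intro j hj1 hjk
          have hdel : delBelow j u' = (delBelow (j+1) u).map (· - 1) := by
            rw [hu', delBelow, List.filter_map]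
            congr 1
            rw [hv, delBelow, delBelow, List.filter_filter]
            apply List.filter_congr
            intro x _
            simp only [Function.comp_apply, ← Bool.decide_and]
            exact decide_eq_decide.mpr (by omega)
          rw [hdel]
          have hint' := hint (j+1) (by omega) (by omega)
          unfold Interleaved at hint' ⊢
          apply (List.isChain_map _).mpr
          refine List.IsChain.imp ?_ hint'
          intro a b hab
          have e : ∀ c : ℕ, (c - 1 = j) ↔ (c = j + 1) := by intro c; omega
          rcases hab with ⟨p, q⟩ | ⟨p, q⟩
          · exact Or.inl ⟨(e a).mpr p, fun hc => q ((e b).mp hc)⟩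
          · exact Or.inr ⟨(e b).mpr p, fun hc => q ((e a).mp hc)⟩
      obtain ⟨s, t, hst⟩ := hIH
      have hfin : (1 :: wf v) <:+: zimin (k+1) := by
        rw [zimin_succ, ← hst]
        simp only [List.map_append]
        rw [hvmap]
        exact lemC _ _ _
      exact huW.trans hfin



/-- A nonempty word over `{1,…,k}` is a factor of `Z_k` iff for every `1 ≤ j ≤ k`,
deleting all letters smaller than `j` yields a `j`-interleaved sequence. -/
theorem factor_zimin_iff (k : ℕ) (u : List ℕ) (hu : u ≠ [])
    (halph : ∀ a ∈ u, 1 ≤ a ∧ a ≤ k) :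
    u <:+: zimin k ↔ ∀ j, 1 ≤ j → j ≤ k → Interleaved j (delBelow j u) := by
  constructor
  · rintro ⟨s, t, hst⟩ j hj1 hjk
    have hfil : delBelow j u <:+: delBelow j (zimin k) :=
      ⟨delBelow j s, delBelow j t, by rw [← hst]; simp [delBelow, List.filter_append]⟩
    exact List.IsChain.infix (altj k j hj1 hjk).2.2 hfil
  · intro h
    exact backward k u hu halph h
end

section
/- In every nonempty factor u of the Zimin word Z_k, the maximal letter occurring in u occurs exactly once in u. -/
lemma foldr_max_mem : ∀ {u : List ℕ}, u ≠ [] → u.foldr max 0 ∈ u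
  | [a], _ => by simp
  | a :: b :: l, _ => by
    rcases max_choice a ((b :: l).foldr max 0) with h | h <;>
      simp only [List.foldr_cons] at * <;> rw [h]
    · exact List.mem_cons_self
    · exact List.mem_cons_of_mem _ (foldr_max_mem (by simp))

lemma le_foldr_max {u : List ℕ} {a : ℕ} (h : a ∈ u) : a ≤ u.foldr max 0 := by
  induction u with
  | nil => simp at h
  | cons b l ih =>
    rcases List.mem_cons.1 h with rfl | h
    · exact le_max_left _ _
    · exact le_trans (ih h) (le_max_right _ _)

lemma mem_zimin_le {k a : ℕ} (h : a ∈ zimin k) : a ≤ k := by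
  induction k with
  | zero => simp [zimin] at h
  | succ n ih =>
    simp only [zimin, List.mem_append, List.mem_singleton] at h
    rcases h with (h | rfl) | h
    · exact (ih h).trans (Nat.le_succ n)
    · exact le_rfl
    · exact (ih h).trans (Nat.le_succ n)

lemma count_zimin (k : ℕ) : (zimin (k + 1)).count (k + 1) = 1 := by
  have h : (k + 1) ∉ zimin k := fun h => by simpa using mem_zimin_le h
  simp [zimin, List.count_append, List.count_eq_zero_of_not_mem h]

lemma infix_split {u l₁ l₂ : List ℕ} {m : ℕ} (hf : u <:+: l₁ ++ m :: l₂)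
    (hm : m ∉ u) : u <:+: l₁ ∨ u <:+: l₂ := by
  obtain ⟨s, t, e⟩ := hf
  rcases le_or_gt (s.length + u.length) l₁.length with h1 | h1
  · left
    have hp : s ++ u <+: l₁ :=
      List.prefix_of_prefix_length_le ⟨t, by simpa [List.append_assoc] using e⟩
        ⟨m :: l₂, rfl⟩ (by simpa using h1)
    exact ((List.suffix_append s u).isInfix).trans hp.isInfix
  rcases le_or_gt (l₁.length + 1) s.length with h2 | h2
  · right
    have hs : u ++ t <:+ l₂ := by
      refine List.suffix_of_suffix_length_le ⟨s, by simpa [List.append_assoc] using e⟩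
        ⟨l₁ ++ [m], by simp⟩ ?_
      have := congrArg List.length e
      simp only [List.length_append, List.length_cons] at this ⊢
      omega
    exact ((List.prefix_append u t).isInfix).trans hs.isInfix
  · exfalso
    apply hm
    have hi : l₁.length - s.length < u.length := by omega
    have : (s ++ (u ++ t))[l₁.length]'(by
        have := congrArg List.length e
        simp only [List.length_append, List.length_cons] at this ⊢
        omega) = (l₁ ++ m :: l₂)[l₁.length]'(by simp) := by
      congr 1
      simpa [List.append_assoc] using e
    rw [List.getElem_append_right (by omega), List.getElem_append_right (le_refl _)] at this
    simp only [Nat.sub_self, List.getElem_cons_zero] at this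
    rw [List.getElem_append_left hi] at this
    rw [← this]
    exact List.getElem_mem _


/-- In every nonempty factor `u` of `Z_k`, the maximal letter of `u` occurs exactly once. -/
theorem factor_zimin_max_once (k : ℕ) (u : List ℕ) (hu : u ≠ []) (hf : u <:+: zimin k) :
    u.count (u.foldr max 0) = 1 := by
  induction k generalizing u with
  | zero =>
    rw [show zimin 0 = [] from rfl, List.infix_nil] at hf
    exact absurd hf hu
  | succ n ih =>
    by_cases hm : (n + 1) ∈ u
    · have hmax : u.foldr max 0 = n + 1 := by
        refine le_antisymm ?_ (le_foldr_max hm)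
        exact mem_zimin_le (hf.sublist.subset (foldr_max_mem hu))
      rw [hmax]
      refine le_antisymm ?_ (List.count_pos_iff.2 hm)
      calc u.count (n + 1) ≤ (zimin (n + 1)).count (n + 1) := hf.sublist.count_le _
        _ = 1 := count_zimin n
    · have hf' : u <:+: zimin n ++ (n + 1) :: zimin n := by
        simpa [zimin, List.append_assoc] using hf
      rcases infix_split hf' hm with h | h
      · exact ih u hu h
      · exact ih u hu h
end

section
/- For every nonempty factor u of the Zimin word Z_k, the length of compress(u) is at most 2k − 1. -/
lemma one_le_mem_zimin {k a : ℕ} (h : a ∈ zimin k) : 1 ≤ a := by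
  induction k with
  | zero => simp [zimin] at h
  | succ n ih =>
    simp only [zimin, List.mem_append, List.mem_singleton] at h
    rcases h with (h | h) | h
    · exact ih h
    · omega
    · exact ih h

lemma zimin_between (k : ℕ) : ∀ i j : ℕ, i < j → j < (zimin k).length →
    (zimin k).getD i 0 = (zimin k).getD j 0 →
    ∃ m, i < m ∧ m < j ∧ (zimin k).getD i 0 < (zimin k).getD m 0 := by
  induction k with
  | zero => intro i j hij hj; simp [zimin] at hj
  | succ n ih =>
    intro i j hij hj he
    set A := zimin n with hA
    set L := A.length with hL
    have hz : zimin (n+1) = (A ++ [n+1]) ++ A := by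
      simp [zimin, List.append_assoc, hA]
    have hlen : (zimin (n+1)).length = 2 * L + 1 := by
      rw [hz]; simp [hL]; omega
    have hget : ∀ p, (zimin (n+1)).getD p 0 =
        if p < L then A.getD p 0 else if p = L then n + 1 else A.getD (p - L - 1) 0 := by
      intro p
      rw [hz]
      by_cases h1 : p < L
      · have e1 : ((A ++ [n+1]) ++ A).getD p 0 = (A ++ [n+1]).getD p 0 :=
          List.getD_append (A ++ [n+1]) A 0 p
            (by simp only [List.length_append, List.length_singleton]; omega)
        rw [e1, List.getD_append A [n+1] 0 p h1, if_pos h1]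
      · by_cases h2 : p = L
        · subst h2
          have e1 : ((A ++ [n+1]) ++ A).getD L 0 = (A ++ [n+1]).getD L 0 :=
            List.getD_append (A ++ [n+1]) A 0 L
              (by simp only [List.length_append, List.length_singleton]; omega)
          have e2 : (A ++ [n+1]).getD L 0 = [n+1].getD (L - A.length) 0 :=
            List.getD_append_right A [n+1] 0 L (by omega)
          rw [e1, e2, if_neg (lt_irrefl L), if_pos rfl]
          simp [hL]
        · have e1 : ((A ++ [n+1]) ++ A).getD p 0 = A.getD (p - (A ++ [n+1]).length) 0 :=
            List.getD_append_right (A ++ [n+1]) A 0 p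
              (by simp only [List.length_append, List.length_singleton]; omega)
          rw [e1, if_neg h1, if_neg h2]
          congr 1
          simp only [List.length_append, List.length_singleton]
          omega
    have hval : ∀ p, p < L → A.getD p 0 ≤ n := by
      intro p hp
      rw [List.getD_eq_getElem _ _ hp]
      exact mem_zimin_le (List.getElem_mem hp)
    rw [hlen] at hj
    rcases lt_trichotomy j L with hjL | hjL | hjL
    · -- both in left copy
      obtain ⟨m, hm1, hm2, hm3⟩ := ih i j hij hjL (by
        have := he; rw [hget i, hget j, if_pos (hij.trans hjL), if_pos hjL] at this; exact this)
      exact ⟨m, hm1, hm2, by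
        rw [hget i, hget m, if_pos (hij.trans hjL), if_pos (hm2.trans hjL)]; exact hm3⟩
    · -- j = L : values differ
      exfalso
      rw [hget i, hget j, hjL] at he
      rw [if_pos (hjL ▸ hij), if_neg (lt_irrefl L), if_pos rfl] at he
      have := hval i (hjL ▸ hij); omega
    · -- j > L
      rcases lt_trichotomy i L with hiL | hiL | hiL
      · -- middle works
        refine ⟨L, hiL, hjL, ?_⟩
        rw [hget i, hget L, if_pos hiL, if_neg (lt_irrefl L), if_pos rfl]
        have := hval i hiL; omega
      · exfalso
        rw [hget i, hget j, hiL] at he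
        rw [if_neg (lt_irrefl L), if_pos rfl, if_neg (by omega), if_neg (by omega)] at he
        have := hval (j - L - 1) (by omega); omega
      · -- both in right copy
        have he' : A.getD (i - L - 1) 0 = A.getD (j - L - 1) 0 := by
          have := he
          rw [hget i, hget j, if_neg (by omega), if_neg (by omega),
            if_neg (by omega), if_neg (by omega)] at this
          exact this
        obtain ⟨m, hm1, hm2, hm3⟩ := ih (i - L - 1) (j - L - 1) (by omega) (by omega) he'
        refine ⟨m + L + 1, by omega, by omega, ?_⟩
        rw [hget i, hget (m + L + 1), if_neg (by omega), if_neg (by omega),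
          if_neg (by omega), if_neg (by omega)]
        have hmm : m + L + 1 - L - 1 = m := by omega
        rw [hmm]; exact hm3

lemma factor_between {k : ℕ} {u : List ℕ} (hf : u <:+: zimin k) :
    ∀ i j : ℕ, i < j → j < u.length → u.getD i 0 = u.getD j 0 →
    ∃ m, i < m ∧ m < j ∧ u.getD i 0 < u.getD m 0 := by
  obtain ⟨s, t, hst⟩ := hf
  intro i j hij hj he
  have key : ∀ p, p < u.length → (zimin k).getD (s.length + p) 0 = u.getD p 0 := by
    intro p hp
    rw [← hst]
    have e1 : (s ++ u ++ t).getD (s.length + p) 0 = (s ++ u).getD (s.length + p) 0 :=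
      List.getD_append (s ++ u) t 0 _ (by simp only [List.length_append]; omega)
    have e2 : (s ++ u).getD (s.length + p) 0 = u.getD (s.length + p - s.length) 0 :=
      List.getD_append_right s u 0 _ (by omega)
    rw [e1, e2]
    congr 1
    omega
  have hjz : s.length + j < (zimin k).length := by
    rw [← hst]; simp only [List.length_append]; omega
  obtain ⟨m, hm1, hm2, hm3⟩ := zimin_between k (s.length + i) (s.length + j)
    (by omega) hjz (by rw [key i (by omega), key j hj]; exact he)
  refine ⟨m - s.length, by omega, by omega, ?_⟩
  have hms : m = s.length + (m - s.length) := by omega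
  rw [← key i (by omega), ← key (m - s.length) (by omega), ← hms]
  exact hm3

lemma length_filterMap_ite {α β : Type*} (p : α → Bool) (g : α → β) (l : List α) :
    (l.filterMap fun i => if p i then none else some (g i)).length
      = (l.filter fun i => !p i).length := by
  induction l with
  | nil => rfl
  | cons a l ih =>
    by_cases h : p a <;> simp [List.filterMap_cons, List.filter_cons, h, ih]

/-- For every nonempty factor `u` of `Z_k`, the length of `compress u` is at most `2k - 1`. -/
theorem compress_length_le (k : ℕ) (u : List ℕ) (hu : u ≠ []) (hf : u <:+: zimin k) :
    (compress u).length ≤ 2 * k - 1 := by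
  classical
  set n := u.length with hn
  set g : ℕ → ℕ := fun i => u.getD i 0 with hg
  -- length of compress as a filter
  have hcl : (compress u).length = ((List.range n).filter fun i =>
      !(((u.take i).any fun l => decide (u.getD i 0 < l)) &&
        ((u.drop (i + 1)).any fun r => decide (u.getD i 0 < r)))).length := by
    unfold compress
    exact length_filterMap_ite _ _ _
  set lf := (List.range n).filter fun i =>
      !(((u.take i).any fun l => decide (u.getD i 0 < l)) &&
        ((u.drop (i + 1)).any fun r => decide (u.getD i 0 < r))) with hlf
  have hnd : lf.Nodup := List.Nodup.filter _ List.nodup_range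
  have hcard : lf.length = lf.toFinset.card := (List.toFinset_card_of_nodup hnd).symm
  set L : Finset ℕ := (Finset.range n).filter (fun i => ∀ l, l < i → g l ≤ g i) with hLdef
  set R : Finset ℕ := (Finset.range n).filter (fun i => ∀ r, i < r → r < n → g r ≤ g i) with hRdef
  -- kept indices are left records or right records
  have hS : lf.toFinset ⊆ L ∪ R := by
    intro i hi
    rw [List.mem_toFinset, hlf, List.mem_filter, List.mem_range] at hi
    obtain ⟨hin, hkeep⟩ := hi
    simp only [Bool.not_eq_true', Bool.and_eq_false_iff, List.any_eq_false,
      decide_eq_true_eq] at hkeep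
    rcases hkeep with h | h
    · apply Finset.mem_union_left
      rw [hLdef, Finset.mem_filter, Finset.mem_range]
      refine ⟨hin, fun l hl => ?_⟩
      have hl' : l < n := hl.trans hin
      have hmem : u.getD l 0 ∈ u.take i := by
        rw [List.getD_eq_getElem u 0 hl']
        have hj' : l < (u.take i).length := by simp [hn]; omega
        have he : (u.take i)[l] = u[l] := List.getElem_take
        exact he ▸ List.getElem_mem hj'
      exact not_lt.mp (h _ hmem)
    · apply Finset.mem_union_right
      rw [hRdef, Finset.mem_filter, Finset.mem_range]
      refine ⟨hin, fun r hr hrn => ?_⟩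
      have hmem : u.getD r 0 ∈ u.drop (i+1) := by
        rw [List.getD_eq_getElem u 0 hrn]
        have hr' : r - (i+1) < (u.drop (i+1)).length := by simp [hn]; omega
        have he : (u.drop (i+1))[r - (i+1)] = u[(i+1) + (r - (i+1))]'(by omega) :=
          List.getElem_drop
        have h2' : u[(i+1) + (r - (i+1))]'(by omega) = u[r]'hrn := by congr 1; omega
        exact (he.trans h2') ▸ List.getElem_mem hr'
      exact not_lt.mp (h _ hmem)
  -- values of u lie in [1, k]
  have hval : ∀ i, i < n → g i ∈ Finset.Icc 1 k := by
    intro i hi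
    have : g i ∈ u := by
      show u.getD i 0 ∈ u
      rw [List.getD_eq_getElem u 0 hi]; exact List.getElem_mem hi
    have hz := hf.subset this
    exact Finset.mem_Icc.mpr ⟨one_le_mem_zimin hz, mem_zimin_le hz⟩
  have hIcc : (Finset.Icc 1 k).card = k := by rw [Nat.card_Icc]; omega
  -- left records have distinct values
  have hLcard : L.card ≤ k := by
    rw [← hIcc]
    apply Finset.card_le_card_of_injOn g
    · intro i hi
      rw [hLdef, Finset.mem_coe, Finset.mem_filter, Finset.mem_range] at hi
      exact hval i hi.1
    · intro i hi j hj hgij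
      rw [hLdef] at hi hj
      simp only [Finset.mem_coe, Finset.mem_filter, Finset.mem_range] at hi hj
      by_contra hne
      rcases lt_or_gt_of_ne hne with hij | hij
      · obtain ⟨m, hm1, hm2, hm3⟩ := factor_between hf i j hij hj.1 hgij
        have := hj.2 m hm2
        rw [← hgij] at this
        exact absurd hm3 (not_lt.mpr this)
      · obtain ⟨m, hm1, hm2, hm3⟩ := factor_between hf j i hij hi.1 hgij.symm
        have := hi.2 m hm2
        rw [hgij] at this
        exact absurd hm3 (not_lt.mpr this)
  -- right records have distinct values
  have hRcard : R.card ≤ k := by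
    rw [← hIcc]
    apply Finset.card_le_card_of_injOn g
    · intro i hi
      rw [hRdef, Finset.mem_coe, Finset.mem_filter, Finset.mem_range] at hi
      exact hval i hi.1
    · intro i hi j hj hgij
      rw [hRdef] at hi hj
      simp only [Finset.mem_coe, Finset.mem_filter, Finset.mem_range] at hi hj
      by_contra hne
      rcases lt_or_gt_of_ne hne with hij | hij
      · obtain ⟨m, hm1, hm2, hm3⟩ := factor_between hf i j hij hj.1 hgij
        have := hi.2 m hm1 (hm2.trans hj.1)
        exact absurd hm3 (not_lt.mpr this)
      · obtain ⟨m, hm1, hm2, hm3⟩ := factor_between hf j i hij hi.1 hgij.symm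
        have := hj.2 m hm1 (hm2.trans hi.1)
        exact absurd hm3 (not_lt.mpr this)
  -- the position of a maximum is in both
  have hn0 : 0 < n := List.length_pos_iff.mpr hu
  obtain ⟨i0, hi0m, hi0⟩ := Finset.exists_max_image (Finset.range n) g
    ⟨0, Finset.mem_range.mpr hn0⟩
  have hinter : 1 ≤ (L ∩ R).card := by
    apply Finset.card_pos.mpr
    refine ⟨i0, Finset.mem_inter.mpr ⟨?_, ?_⟩⟩
    · rw [hLdef, Finset.mem_filter]
      exact ⟨hi0m, fun l hl => hi0 l (Finset.mem_range.mpr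
        (hl.trans (Finset.mem_range.mp hi0m)))⟩
    · rw [hRdef, Finset.mem_filter]
      exact ⟨hi0m, fun r _ hrn => hi0 r (Finset.mem_range.mpr hrn)⟩
  have hunion := Finset.card_union_add_card_inter L R
  have hsub : lf.toFinset.card ≤ (L ∪ R).card := Finset.card_le_card hS
  rw [hcl, hcard]
  omega
end

section
/- compress(Z_k) is the sequence 1,2,...,k−1,k,k−1,...,2,1 of length 2k−1. -/
/-- compress generalized with left-max `m`. -/
def cAux (m : ℕ) : List ℕ → List ℕ
  | [] => []
  | a :: t => if (decide (a < m) && t.any fun r => decide (a < r))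
      then cAux (max m a) t else a :: cAux (max m a) t

lemma key (u : List ℕ) : ∀ m : ℕ,
    ((List.range u.length).filterMap fun i =>
      if (decide (u.getD i 0 < m) || ((u.take i).any fun l => decide (u.getD i 0 < l))) &&
         ((u.drop (i + 1)).any fun r => decide (u.getD i 0 < r))
      then none else some (u.getD i 0)) = cAux m u := by
  induction u with
  | nil => intro m; simp [cAux]
  | cons a t ih =>
    intro m
    rw [List.length_cons, List.range_succ_eq_map, List.filterMap_cons, List.filterMap_map]
    have h2 : ((List.range t.length).filterMap
        ((fun i =>
          if (decide ((a :: t).getD i 0 < m) || (((a :: t).take i).any fun l => decide ((a :: t).getD i 0 < l))) &&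
             (((a :: t).drop (i + 1)).any fun r => decide ((a :: t).getD i 0 < r))
          then none else some ((a :: t).getD i 0)) ∘ Nat.succ)) = cAux (max m a) t := by
      rw [← ih (max m a)]
      apply List.filterMap_congr  -- maybe name wrong
      intro i hi
      simp only [Function.comp, List.getD_cons_succ, List.take_succ_cons, List.drop_succ_cons,
        List.any_cons]
      have : (decide (t.getD i 0 < m) || (decide (t.getD i 0 < a) || ((t.take i).any fun l => decide (t.getD i 0 < l))))
          = (decide (t.getD i 0 < max m a) || ((t.take i).any fun l => decide (t.getD i 0 < l))) := by
        rw [← Bool.or_assoc]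
        congr 1
        simp [lt_max_iff]
      rw [this]
    rw [h2]
    simp only [cAux, List.getD_cons_zero, List.take_zero, List.any_nil, Bool.or_false,
      List.drop_succ_cons, List.drop_zero]
    split <;> rename_i heq <;> split at heq <;> simp_all

lemma compress_eq (u : List ℕ) : compress u = cAux 0 u := by
  rw [← key u 0]
  unfold compress
  apply List.filterMap_congr
  intro i _
  simp

def lrecAux (m : ℕ) : List ℕ → List ℕ
  | [] => []
  | a :: t => if a < m then lrecAux (max m a) t else a :: lrecAux (max m a) t

def rrec : List ℕ → List ℕ
  | [] => []
  | a :: t => if ∃ r ∈ t, a < r then rrec t else a :: rrec t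

lemma cAux_append (u : List ℕ) : ∀ (m : ℕ) (v : List ℕ), (∃ b ∈ v, ∀ a ∈ u, a < b) →
    cAux m (u ++ v) = lrecAux m u ++ cAux (u.foldl max m) v := by
  induction u with
  | nil => intro m v _; simp [lrecAux]
  | cons a t ih =>
    intro m v hb
    obtain ⟨b, hbv, hab⟩ := hb
    have hav : ∃ x ∈ t ++ v, a < x := ⟨b, by simp [hbv], hab a (by simp)⟩
    simp only [List.cons_append, cAux, lrecAux, List.foldl_cons, List.append_eq]
    rw [ih (max m a) v ⟨b, hbv, fun a ha => hab a (by simp [ha])⟩]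
    by_cases h : a < m
    · have hany : ((t.append v).any fun r => decide (a < r)) = true := by
        obtain ⟨x, hx, hax⟩ := hav
        simp only [List.any_eq_true, decide_eq_true_eq]
        exact ⟨x, by simpa using hx, hax⟩
      have hc : (decide (a < m) && (t ++ v).any fun r => decide (a < r)) = true := by
        simp only [Bool.and_eq_true, decide_eq_true_eq]
        exact ⟨h, by simpa using hany⟩
      rw [if_pos hc, if_pos h]
    · simp [h, hav]

lemma lrecAux_append (u : List ℕ) : ∀ (m : ℕ) (v : List ℕ),
    lrecAux m (u ++ v) = lrecAux m u ++ lrecAux (u.foldl max m) v := by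
  induction u with
  | nil => intro m v; simp [lrecAux]
  | cons a t ih =>
    intro m v
    simp only [List.cons_append, lrecAux, List.foldl_cons, List.append_eq]
    rw [ih]
    by_cases h : a < m <;> simp [h]

lemma cAux_of_lt (v : List ℕ) : ∀ m : ℕ, (∀ a ∈ v, a < m) → cAux m v = rrec v := by
  induction v with
  | nil => intro m _; rfl
  | cons a t ih =>
    intro m h
    have ham : a < m := h a (by simp)
    have hmax : max m a = m := max_eq_left ham.le
    simp only [cAux, rrec, ham, hmax, decide_true, Bool.true_and]
    rw [ih m (fun x hx => h x (by simp [hx]))]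
    by_cases he : ∃ r ∈ t, a < r
    · simp [he]
    · simp [he]

lemma lrecAux_nil (v : List ℕ) : ∀ m : ℕ, (∀ a ∈ v, a < m) → lrecAux m v = [] := by
  induction v with
  | nil => intro m _; rfl
  | cons a t ih =>
    intro m h
    have ham : a < m := h a (by simp)
    simp only [lrecAux, ham, if_true, max_eq_left ham.le]
    exact ih m (fun x hx => h x (by simp [hx]))

lemma rrec_append (u : List ℕ) (v : List ℕ) (h : ∃ b ∈ v, ∀ a ∈ u, a < b) :
    rrec (u ++ v) = rrec v := by
  induction u with
  | nil => rfl
  | cons a t ih =>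
    obtain ⟨b, hbv, hab⟩ := h
    have hav : ∃ x ∈ t ++ v, a < x := ⟨b, by simp [hbv], hab a (by simp)⟩
    simp only [List.cons_append, rrec, hav, if_true, List.append_eq]
    exact ih ⟨b, hbv, fun a ha => hab a (by simp [ha])⟩

lemma zimin_le (k : ℕ) : ∀ a ∈ zimin k, a ≤ k := by
  induction k with
  | zero => simp [zimin]
  | succ n ih =>
    intro a ha
    simp only [zimin, List.mem_append, List.mem_singleton] at ha
    rcases ha with (ha | ha) | ha
    · exact (ih a ha).trans (Nat.le_succ n)
    · omega
    · exact (ih a ha).trans (Nat.le_succ n)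

lemma foldl_max_zimin (k : ℕ) : ∀ m : ℕ, (zimin k).foldl max m = max m k := by
  induction k with
  | zero => intro m; simp [zimin]
  | succ n ih =>
    intro m
    simp only [zimin, List.foldl_append, List.foldl_cons, List.foldl_nil, ih]
    omega

lemma lrec_zimin (k : ℕ) : lrecAux 0 (zimin k) = List.range' 1 k := by
  induction k with
  | zero => simp [zimin, lrecAux]
  | succ n ih =>
    have h1 : zimin (n + 1) = zimin n ++ ((n + 1) :: zimin n) := by
      simp [zimin]
    rw [h1, lrecAux_append, ih, foldl_max_zimin n 0]
    have hnn : ¬ (n + 1 < max 0 n) := by omega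
    simp only [lrecAux, hnn, if_false]
    rw [lrecAux_nil (zimin n) (max (max 0 n) (n+1)) (fun a ha => by
      have := zimin_le n a ha; omega)]
    rw [List.range'_1_concat]
    simp
    omega

lemma rrec_zimin (k : ℕ) : rrec (zimin k) = (List.range' 1 k).reverse := by
  induction k with
  | zero => simp [zimin, rrec]
  | succ n ih =>
    have h1 : zimin (n + 1) = zimin n ++ ((n + 1) :: zimin n) := by
      simp [zimin]
    rw [h1, rrec_append _ _ ⟨n + 1, by simp, fun a ha => by
      have := zimin_le n a ha; omega⟩]
    have hne : ¬ ∃ r ∈ zimin n, n + 1 < r := by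
      rintro ⟨r, hr, hlt⟩; have := zimin_le n r hr; omega
    simp only [rrec, hne, if_false]
    rw [ih, List.range'_1_concat]
    simp
    omega

/-- `compress (Z_k)` is the sequence `1,2,…,k-1,k,k-1,…,2,1` of length `2k - 1`. -/
theorem compress_zimin (k : ℕ) (hk : 1 ≤ k) :
    compress (zimin k) = List.range' 1 k ++ (List.range' 1 (k - 1)).reverse ∧
      (compress (zimin k)).length = 2 * k - 1 := by
  obtain ⟨n, rfl⟩ : ∃ n, k = n + 1 := ⟨k - 1, by omega⟩
  have h1 : zimin (n + 1) = zimin n ++ ((n + 1) :: zimin n) := by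
    simp [zimin]
  have hlt : ∀ a ∈ zimin n, a < n + 1 := fun a ha => by
    have := zimin_le n a ha; omega
  have main : compress (zimin (n + 1)) =
      List.range' 1 (n + 1) ++ (List.range' 1 n).reverse := by
    rw [compress_eq, h1, cAux_append _ _ _ ⟨n + 1, by simp, hlt⟩,
      lrec_zimin, foldl_max_zimin n 0]
    have hne : ¬ ((decide (n + 1 < max 0 n) && (zimin n).any fun r => decide (n + 1 < r)) = true) := by
      simp only [Bool.and_eq_true, decide_eq_true_eq]
      rintro ⟨h, -⟩; omega
    simp only [cAux, if_neg hne]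
    rw [cAux_of_lt (zimin n) (max (max 0 n) (n + 1)) (fun a ha => by
      have := zimin_le n a ha; omega), rrec_zimin,
      List.range'_1_concat]
    simp
    omega
  refine ⟨by simpa using main, ?_⟩
  rw [main]
  simp
  omega
end

section
/- If a pattern π (a word over a variable alphabet V) occurs in Z_k via a non-erasing morphism h (i.e., h(π) is a factor of Z_k), then the pattern π_{(2)} obtained from π by deleting all variables x with max-letter rank equal to 1 (i.e., h(x) consisting only of 1's, equivalently h(x)=1) occurs in Z_{k-1} via some non-erasing morphism. -/
def f1 (u : List ℕ) : List ℕ := (u.filter (fun a => decide (2 ≤ a))).map (· - 1)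

lemma f1_append (u v : List ℕ) : f1 (u ++ v) = f1 u ++ f1 v := by
  simp [f1]

lemma f1_zimin (k : ℕ) : f1 (zimin (k + 1)) = zimin k := by
  induction k with
  | zero => simp [zimin, f1]
  | succ n ih =>
    have e : zimin (n + 2) = zimin (n + 1) ++ [n + 2] ++ zimin (n + 1) := rfl
    have h2 : f1 [n + 2] = [n + 1] := by simp [f1]
    rw [e, f1_append, f1_append, ih, h2]
    simp [zimin]

lemma le_foldr_max_s17 {a : ℕ} {l : List ℕ} (ha : a ∈ l) : a ≤ l.foldr max 0 := by
  induction l with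
  | nil => simp at ha
  | cons b t ih =>
    rcases List.mem_cons.1 ha with rfl | ha
    · simp
    · exact le_trans (ih ha) (le_max_right _ _)

lemma foldr_max_le {m : ℕ} {l : List ℕ} (h : ∀ a ∈ l, a ≤ m) : l.foldr max 0 ≤ m := by
  induction l with
  | nil => simp
  | cons b t ih =>
    exact max_le (h b List.mem_cons_self) (ih fun a ha => h a (List.mem_cons_of_mem _ ha))

lemma f1_ne_nil (l : List ℕ) (hl : l ≠ []) (h1 : ∀ a ∈ l, 1 ≤ a)
    (hm : l.foldr max 0 ≠ 1) : f1 l ≠ [] := by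
  intro hcon
  apply hm
  have hall : ∀ a ∈ l, a = 1 := by
    intro a ha
    have h2 : ¬ (2 ≤ a) := by
      intro h2
      have : (a - 1) ∈ f1 l := by
        simp only [f1, List.mem_map, List.mem_filter]
        exact ⟨a, ⟨ha, by simpa using h2⟩, rfl⟩
      simp [hcon] at this
    have := h1 a ha
    omega
  obtain ⟨b, t, rfl⟩ := List.exists_cons_of_ne_nil hl
  have h1' : 1 ≤ (b :: t).foldr max 0 :=
    le_trans (by rw [hall b List.mem_cons_self]) (le_foldr_max_s17 List.mem_cons_self)
  have h2' : (b :: t).foldr max 0 ≤ 1 := foldr_max_le fun a ha => le_of_eq (hall a ha)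
  omega

lemma f1_eq_nil_of_max_one (l : List ℕ) (hm : l.foldr max 0 = 1) : f1 l = [] := by
  have : l.filter (fun a => decide (2 ≤ a)) = [] := by
    apply List.filter_eq_nil_iff.2
    intro a ha
    have := le_foldr_max_s17 ha
    simp; omega
  simp [f1, this]

lemma flatten_filter {V : Type*} (h : V → List ℕ) (π : List V) :
    ((π.filter (fun x => decide ((h x).foldr max 0 ≠ 1))).map (fun x => f1 (h x))).flatten
      = f1 ((π.map h).flatten) := by
  induction π with
  | nil => simp [f1]
  | cons x t ih =>
    simp only [ne_eq, decide_not] at ih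
    by_cases hx : (h x).foldr max 0 = 1
    · simp [List.filter_cons, hx, ih, f1_append, f1_eq_nil_of_max_one _ hx]
    · simp [List.filter_cons, hx, ih, f1_append]


/-- If a pattern `π` occurs in `Z_k` via a non-erasing morphism `h`, then the pattern obtained
by deleting all variables of rank 1 occurs in `Z_{k-1}` via some non-erasing morphism. -/
theorem pattern_delete_rank_one {V : Type*} (k : ℕ) (hk : 1 ≤ k) (π : List V) (h : V → List ℕ)
    (hne : ∀ x, h x ≠ []) (halph : ∀ x, ∀ a ∈ h x, 1 ≤ a ∧ a ≤ k)
    (hocc : ((π.map h).flatten) <:+: zimin k) :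
    ∃ g : V → List ℕ,
      (∀ x ∈ π.filter (fun x => decide ((h x).foldr max 0 ≠ 1)), g x ≠ []) ∧
      (((π.filter (fun x => decide ((h x).foldr max 0 ≠ 1))).map g).flatten) <:+: zimin (k - 1) := by
  obtain ⟨m, rfl⟩ : ∃ m, k = m + 1 := ⟨k - 1, (Nat.succ_pred_eq_of_pos hk).symm⟩
  refine ⟨fun x => f1 (h x), ?_, ?_⟩
  · intro x hx
    rw [List.mem_filter] at hx
    exact f1_ne_nil _ (hne x) (fun a ha => (halph x a ha).1) (by simpa using hx.2)
  · rw [flatten_filter]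
    obtain ⟨s, t, hst⟩ := hocc
    have key : f1 s ++ f1 ((π.map h).flatten) ++ f1 t = zimin m := by
      rw [← f1_append, ← f1_append, hst, f1_zimin]
    simp only [Nat.add_sub_cancel]
    exact ⟨f1 s, f1 t, key⟩
end
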